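/- The rename rule is admissible in minimal-logic natural deduction: for every set of formulas Γ and formulas α, α' with α ≈ α', the deductions Γ ⊢ α and Γ ⊢ α' are equivalent (Γ ⊢ α if and only if Γ ⊢ α'). -/
import Mathlib


/-- Variables, indexed by natural numbers. -/
structure FOVar where
  idx : ℕ
deriving DecidableEq

/-- Function symbols: an index and an arity. -/
structure FOFunc where
  idx : ℕ
  arity : ℕ
deriving DecidableEq

/-- Relation symbols: an index and an arity. -/
structure FORel where
  idx : ℕ
  arity : ℕ
deriving DecidableEq

/-- Length-indexed vectors. -/
inductive Vec (A : Type) : ℕ → Type where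
  | nil : Vec A 0
  | cons : ∀ {n}, A → Vec A n → Vec A (n + 1)

/-- A predicate holds on every element of a vector. -/
inductive Vec.All {A : Type} (P : A → Prop) : ∀ {n}, Vec A n → Prop where
  | nil : Vec.All P Vec.nil
  | cons : ∀ {n x} {xs : Vec A n}, P x → Vec.All P xs → Vec.All P (Vec.cons x xs)

/-- First-order terms. -/
inductive Term : Type where
  | varterm : FOVar → Term
  | functerm : (f : FOFunc) → Vec Term f.arity → Term

/-- First-order formulas. -/
inductive Formula : Type where
  | atom : (r : FORel) → Vec Term r.arity → Formula
  | imp : Formula → Formula → Formula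
  | and : Formula → Formula → Formula
  | or : Formula → Formula → Formula
  | all : FOVar → Formula → Formula
  | ex : FOVar → Formula → Formula

/-- The variable x does not occur in a term. -/
inductive NotInTerm (x : FOVar) : Term → Prop where
  | varterm : ∀ {y}, x ≠ y → NotInTerm x (Term.varterm y)
  | functerm : ∀ {f} {us : Vec Term f.arity},
      Vec.All (NotInTerm x) us → NotInTerm x (Term.functerm f us)

/-- The variable x does not occur in any term of a vector. -/
def NotInTerms {n : ℕ} (x : FOVar) (ts : Vec Term n) : Prop :=
  Vec.All (NotInTerm x) ts

/-- The variable x is not free in a formula. -/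
inductive NotFreeIn : FOVar → Formula → Prop where
  | atom : ∀ {x r} {ts : Vec Term r.arity},
      NotInTerms x ts → NotFreeIn x (Formula.atom r ts)
  | imp : ∀ {x α β}, NotFreeIn x α → NotFreeIn x β → NotFreeIn x (Formula.imp α β)
  | and : ∀ {x α β}, NotFreeIn x α → NotFreeIn x β → NotFreeIn x (Formula.and α β)
  | or : ∀ {x α β}, NotFreeIn x α → NotFreeIn x β → NotFreeIn x (Formula.or α β)
  | all_self : ∀ x α, NotFreeIn x (Formula.all x α)
  | ex_self : ∀ x α, NotFreeIn x (Formula.ex x α)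
  | all : ∀ {x α} (y : FOVar), NotFreeIn x α → NotFreeIn x (Formula.all y α)
  | ex : ∀ {x α} (y : FOVar), NotFreeIn x α → NotFreeIn x (Formula.ex y α)

mutual
/-- ⟨u⟩[x/t]≡v : substituting t for x in the term u yields v. -/
inductive TermSub : Term → FOVar → Term → Term → Prop where
  | var_eq : ∀ {x t}, TermSub (Term.varterm x) x t t
  | var_ne : ∀ {x t y}, x ≠ y → TermSub (Term.varterm y) x t (Term.varterm y)
  | functerm : ∀ {x t f} {us vs : Vec Term f.arity},
      TermsSub us x t vs → TermSub (Term.functerm f us) x t (Term.functerm f vs)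

/-- [us][x/t]≡vs : componentwise substitution in vectors of terms. -/
inductive TermsSub : ∀ {n}, Vec Term n → FOVar → Term → Vec Term n → Prop where
  | nil : ∀ {x t}, TermsSub Vec.nil x t Vec.nil
  | cons : ∀ {x t u v n} {us vs : Vec Term n},
      TermSub u x t v → TermsSub us x t vs →
      TermsSub (Vec.cons u us) x t (Vec.cons v vs)
end

/-- α[x/t]≡β : substituting t for all free occurrences of x in α yields β. -/
inductive FormulaSub : Formula → FOVar → Term → Formula → Prop where
  | ident : ∀ α x, FormulaSub α x (Term.varterm x) α
  | notfree : ∀ {α x t}, NotFreeIn x α → FormulaSub α x t α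
  | atom : ∀ {x t} (r : FORel) {us vs : Vec Term r.arity},
      TermsSub us x t vs → FormulaSub (Formula.atom r us) x t (Formula.atom r vs)
  | imp : ∀ {α α' β β' x t}, FormulaSub α x t α' → FormulaSub β x t β' →
      FormulaSub (Formula.imp α β) x t (Formula.imp α' β')
  | and : ∀ {α α' β β' x t}, FormulaSub α x t α' → FormulaSub β x t β' →
      FormulaSub (Formula.and α β) x t (Formula.and α' β')
  | or : ∀ {α α' β β' x t}, FormulaSub α x t α' → FormulaSub β x t β' →
      FormulaSub (Formula.or α β) x t (Formula.or α' β')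
  | all_self : ∀ {t} x α, FormulaSub (Formula.all x α) x t (Formula.all x α)
  | ex_self : ∀ {t} x α, FormulaSub (Formula.ex x α) x t (Formula.ex x α)
  | all : ∀ {α β x y t}, x ≠ y → NotInTerm y t → FormulaSub α x t β →
      FormulaSub (Formula.all y α) x t (Formula.all y β)
  | ex : ∀ {α β x y t}, x ≠ y → NotInTerm y t → FormulaSub α x t β →
      FormulaSub (Formula.ex y α) x t (Formula.ex y β)

/-- The term t is free for the variable x in a formula. -/
inductive FreeFor (t : Term) (x : FOVar) : Formula → Prop where
  | notfree : ∀ {α}, NotFreeIn x α → FreeFor t x α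
  | atom : ∀ r us, FreeFor t x (Formula.atom r us)
  | imp : ∀ {α β}, FreeFor t x α → FreeFor t x β → FreeFor t x (Formula.imp α β)
  | and : ∀ {α β}, FreeFor t x α → FreeFor t x β → FreeFor t x (Formula.and α β)
  | or : ∀ {α β}, FreeFor t x α → FreeFor t x β → FreeFor t x (Formula.or α β)
  | all_self : ∀ α, FreeFor t x (Formula.all x α)
  | ex_self : ∀ α, FreeFor t x (Formula.ex x α)
  | all : ∀ {α y}, NotInTerm y t → FreeFor t x α → FreeFor t x (Formula.all y α)
  | ex : ∀ {α y}, NotInTerm y t → FreeFor t x α → FreeFor t x (Formula.ex y α)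

/-- The variable x appears nowhere (free or bound) in a formula. -/
inductive FreshIn (x : FOVar) : Formula → Prop where
  | atom : ∀ {r} {ts : Vec Term r.arity}, NotInTerms x ts → FreshIn x (Formula.atom r ts)
  | imp : ∀ {α β}, FreshIn x α → FreshIn x β → FreshIn x (Formula.imp α β)
  | and : ∀ {α β}, FreshIn x α → FreshIn x β → FreshIn x (Formula.and α β)
  | or : ∀ {α β}, FreshIn x α → FreshIn x β → FreshIn x (Formula.or α β)
  | all : ∀ {α y}, y ≠ x → FreshIn x α → FreshIn x (Formula.all y α)
  | ex : ∀ {α y}, y ≠ x → FreshIn x α → FreshIn x (Formula.ex y α)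

/-- Formula equivalence: equality up to renaming of bound variables. -/
inductive FormulaEquiv : Formula → Formula → Prop where
  | atom : ∀ r ts, FormulaEquiv (Formula.atom r ts) (Formula.atom r ts)
  | imp : ∀ {α β α' β'}, FormulaEquiv α α' → FormulaEquiv β β' →
      FormulaEquiv (Formula.imp α β) (Formula.imp α' β')
  | and : ∀ {α β α' β'}, FormulaEquiv α α' → FormulaEquiv β β' →
      FormulaEquiv (Formula.and α β) (Formula.and α' β')
  | or : ∀ {α β α' β'}, FormulaEquiv α α' → FormulaEquiv β β' →
      FormulaEquiv (Formula.or α β) (Formula.or α' β')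
  | all : ∀ {α α'} (x : FOVar), FormulaEquiv α α' → FormulaEquiv (Formula.all x α) (Formula.all x α')
  | ex : ∀ {α α'} (x : FOVar), FormulaEquiv α α' → FormulaEquiv (Formula.ex x α) (Formula.ex x α')
  | all_rename : ∀ {α β β' x y}, NotFreeIn y α →
      FormulaSub α x (Term.varterm y) β → FormulaEquiv β β' →
      FormulaEquiv (Formula.all x α) (Formula.all y β')
  | ex_rename : ∀ {α β β' x y}, NotFreeIn y α →
      FormulaSub α x (Term.varterm y) β → FormulaEquiv β β' →
      FormulaEquiv (Formula.ex x α) (Formula.ex y β')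
  | all_rename' : ∀ {α α' β' x y}, FormulaEquiv α α' → NotFreeIn y α' →
      FormulaSub α' x (Term.varterm y) β' →
      FormulaEquiv (Formula.all x α) (Formula.all y β')
  | ex_rename' : ∀ {α α' β' x y}, FormulaEquiv α α' → NotFreeIn y α' →
      FormulaSub α' x (Term.varterm y) β' →
      FormulaEquiv (Formula.ex x α) (Formula.ex y β')

/-- Natural deduction for minimal first-order logic. -/
inductive Deduction : Set Formula → Formula → Prop where
  | assume : ∀ (α : Formula), Deduction {α} α
  | close : ∀ {Γ Δ : Set Formula} {α}, Γ ⊆ Δ → Deduction Γ α → Deduction Δ α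
  | arrowintro : ∀ {Γ β} (α : Formula), Deduction Γ β →
      Deduction (Γ \ {α}) (Formula.imp α β)
  | arrowelim : ∀ {Γ₁ Γ₂ α β}, Deduction Γ₁ (Formula.imp α β) → Deduction Γ₂ α →
      Deduction (Γ₁ ∪ Γ₂) β
  | conjintro : ∀ {Γ₁ Γ₂ α β}, Deduction Γ₁ α → Deduction Γ₂ β →
      Deduction (Γ₁ ∪ Γ₂) (Formula.and α β)
  | conjelim : ∀ {Γ₁ Γ₂ α β γ}, Deduction Γ₁ (Formula.and α β) → Deduction Γ₂ γ →
      Deduction (Γ₁ ∪ (Γ₂ \ {α, β})) γ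
  | disjintro1 : ∀ {Γ α} (β : Formula), Deduction Γ α → Deduction Γ (Formula.or α β)
  | disjintro2 : ∀ {Γ β} (α : Formula), Deduction Γ β → Deduction Γ (Formula.or α β)
  | disjelim : ∀ {Γ₁ Γ₂ Γ₃ α β γ}, Deduction Γ₁ (Formula.or α β) →
      Deduction Γ₂ γ → Deduction Γ₃ γ →
      Deduction (Γ₁ ∪ (Γ₂ \ {α}) ∪ (Γ₃ \ {β})) γ
  | univintro : ∀ {Γ α} (x : FOVar), (∀ γ ∈ Γ, NotFreeIn x γ) →
      Deduction Γ α → Deduction Γ (Formula.all x α)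
  | univelim : ∀ {Γ α x β} (t : Term), FormulaSub α x t β →
      Deduction Γ (Formula.all x α) → Deduction Γ β
  | existintro : ∀ {Γ α β} (t : Term) (x : FOVar), FormulaSub α x t β →
      Deduction Γ β → Deduction Γ (Formula.ex x α)
  | existelim : ∀ {Γ₁ Γ₂ α β x}, NotFreeIn x β → (∀ γ ∈ Γ₂ \ {α}, NotFreeIn x γ) →
      Deduction Γ₁ (Formula.ex x α) → Deduction Γ₂ β →
      Deduction (Γ₁ ∪ (Γ₂ \ {α})) β

/-- ⊥: the atom of a fixed nullary relation symbol. -/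
def Formula.bot : Formula := Formula.atom ⟨0, 0⟩ Vec.nil

/-- ¬α is α ⇒ ⊥. -/
def Formula.neg (α : Formula) : Formula := Formula.imp α Formula.bot

/-! ### Auxiliary lemmas -/

/-- Cut: composing deductions. -/
lemma ded_cut {Γ : Set Formula} {α β : Formula}
    (h1 : Deduction Γ α) (h2 : Deduction {α} β) : Deduction Γ β := by
  have h3 : Deduction (({α} : Set Formula) \ {α}) (Formula.imp α β) :=
    Deduction.arrowintro α h2
  have h4 : Deduction Γ (Formula.imp α β) := Deduction.close (by simp) h3
  exact Deduction.close (by simp) (Deduction.arrowelim h4 h1)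

mutual
theorem termSub_self : ∀ {u : Term} {x : FOVar} {v : Term},
    TermSub u x (Term.varterm x) v → v = u
  | _, _, _, TermSub.var_eq => rfl
  | _, _, _, TermSub.var_ne _ => rfl
  | _, _, _, TermSub.functerm h => by rw [termsSub_self h]

theorem termsSub_self : ∀ {n : ℕ} {us : Vec Term n} {x : FOVar} {vs : Vec Term n},
    TermsSub us x (Term.varterm x) vs → vs = us
  | _, _, _, _, TermsSub.nil => rfl
  | _, _, _, _, TermsSub.cons h hs => by rw [termSub_self h, termsSub_self hs]
end

theorem formulaSub_self : ∀ {α : Formula} {x : FOVar} {t : Term} {β : Formula},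
    FormulaSub α x t β → t = Term.varterm x → β = α := by
  intro α x t β h
  induction h with
  | ident => intro _; rfl
  | notfree => intro _; rfl
  | atom r hts => intro ht; subst ht; rw [termsSub_self hts]
  | imp _ _ ih1 ih2 => intro ht; rw [ih1 ht, ih2 ht]
  | and _ _ ih1 ih2 => intro ht; rw [ih1 ht, ih2 ht]
  | or _ _ ih1 ih2 => intro ht; rw [ih1 ht, ih2 ht]
  | all_self => intro _; rfl
  | ex_self => intro _; rfl
  | all _ _ _ ih => intro ht; rw [ih ht]
  | ex _ _ _ ih => intro ht; rw [ih ht]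

mutual
theorem termSub_inv : ∀ {x y : FOVar}, x ≠ y → ∀ {u v : Term},
    NotInTerm y u → TermSub u x (Term.varterm y) v →
    NotInTerm x v ∧ TermSub v y (Term.varterm x) u
  | _, _, hxy, _, _, _, TermSub.var_eq =>
      ⟨NotInTerm.varterm hxy, TermSub.var_eq⟩
  | _, _, _, _, _, hni, TermSub.var_ne hxz =>
      have hyz := by cases hni with | varterm h => exact h
      ⟨NotInTerm.varterm hxz, TermSub.var_ne hyz⟩
  | _, _, hxy, _, _, hni, TermSub.functerm hs =>
      have hall := by cases hni with | functerm h => exact h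
      have h := termsSub_inv hxy hall hs
      ⟨NotInTerm.functerm h.1, TermSub.functerm h.2⟩

theorem termsSub_inv : ∀ {x y : FOVar}, x ≠ y → ∀ {n : ℕ} {us vs : Vec Term n},
    Vec.All (NotInTerm y) us → TermsSub us x (Term.varterm y) vs →
    Vec.All (NotInTerm x) vs ∧ TermsSub vs y (Term.varterm x) us
  | _, _, _, _, _, _, _, TermsSub.nil => ⟨Vec.All.nil, TermsSub.nil⟩
  | _, _, hxy, _, _, _, hall, TermsSub.cons h hs =>
      have h1 := by cases hall with | cons a b => exact a
      have h2 := by cases hall with | cons a b => exact b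
      have i1 := termSub_inv hxy h1 h
      have i2 := termsSub_inv hxy h2 hs
      ⟨Vec.All.cons i1.1 i2.1, TermsSub.cons i1.2 i2.2⟩
end

theorem formulaSub_inv {y : FOVar} : ∀ {α : Formula} {x : FOVar} {t : Term} {β : Formula},
    FormulaSub α x t β → t = Term.varterm y → x ≠ y → NotFreeIn y α →
    NotFreeIn x β ∧ FormulaSub β y (Term.varterm x) α := by
  intro α x t β h
  induction h with
  | ident α x =>
      intro ht hxy _
      exact absurd (Term.varterm.inj ht) hxy
  | notfree hα =>
      intro _ _ hnf
      exact ⟨hα, FormulaSub.notfree hnf⟩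
  | atom r hts =>
      intro ht hxy hnf
      subst ht
      cases hnf with
      | atom hus =>
        have h := termsSub_inv hxy hus hts
        exact ⟨NotFreeIn.atom h.1, FormulaSub.atom r h.2⟩
  | imp _ _ ih1 ih2 =>
      intro ht hxy hnf
      have h1 := by cases hnf with | imp a b => exact a
      have h2 := by cases hnf with | imp a b => exact b
      obtain ⟨a1, a2⟩ := ih1 ht hxy h1
      obtain ⟨b1, b2⟩ := ih2 ht hxy h2
      exact ⟨NotFreeIn.imp a1 b1, FormulaSub.imp a2 b2⟩
  | and _ _ ih1 ih2 =>
      intro ht hxy hnf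
      have h1 := by cases hnf with | and a b => exact a
      have h2 := by cases hnf with | and a b => exact b
      obtain ⟨a1, a2⟩ := ih1 ht hxy h1
      obtain ⟨b1, b2⟩ := ih2 ht hxy h2
      exact ⟨NotFreeIn.and a1 b1, FormulaSub.and a2 b2⟩
  | or _ _ ih1 ih2 =>
      intro ht hxy hnf
      have h1 := by cases hnf with | or a b => exact a
      have h2 := by cases hnf with | or a b => exact b
      obtain ⟨a1, a2⟩ := ih1 ht hxy h1
      obtain ⟨b1, b2⟩ := ih2 ht hxy h2
      exact ⟨NotFreeIn.or a1 b1, FormulaSub.or a2 b2⟩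
  | all_self x α =>
      intro _ _ hnf
      exact ⟨NotFreeIn.all_self x α, FormulaSub.notfree hnf⟩
  | ex_self x α =>
      intro _ _ hnf
      exact ⟨NotFreeIn.ex_self x α, FormulaSub.notfree hnf⟩
  | @all α0 β0 x0 z t0 hxz hzt _ ih =>
      intro ht hxy hnf
      subst ht
      have hzy : z ≠ y := by cases hzt with | varterm h => exact h
      have hα : NotFreeIn y α0 := by
        cases hnf with
        | all_self => exact absurd rfl hzy
        | all _ h => exact h
      obtain ⟨h1, h2⟩ := ih rfl hxy hα
      exact ⟨NotFreeIn.all _ h1,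
        FormulaSub.all (Ne.symm hzy) (NotInTerm.varterm (Ne.symm hxz)) h2⟩
  | @ex α0 β0 x0 z t0 hxz hzt _ ih =>
      intro ht hxy hnf
      subst ht
      have hzy : z ≠ y := by cases hzt with | varterm h => exact h
      have hα : NotFreeIn y α0 := by
        cases hnf with
        | ex_self => exact absurd rfl hzy
        | ex _ h => exact h
      obtain ⟨h1, h2⟩ := ih rfl hxy hα
      exact ⟨NotFreeIn.ex _ h1,
        FormulaSub.ex (Ne.symm hzy) (NotInTerm.varterm (Ne.symm hxz)) h2⟩

/-- Congruence for the universal quantifier. -/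
lemma allCong {α α' : Formula} {x : FOVar} (h : Deduction {α} α') :
    Deduction {Formula.all x α} (Formula.all x α') := by
  have d1 : Deduction {Formula.all x α} α :=
    Deduction.univelim (Term.varterm x) (FormulaSub.ident α x)
      (Deduction.assume (Formula.all x α))
  have d2 := ded_cut d1 h
  refine Deduction.univintro x ?_ d2
  rintro γ rfl
  exact NotFreeIn.all_self x α

/-- Congruence for the existential quantifier. -/
lemma exCong {α α' : Formula} {x : FOVar} (h : Deduction {α} α') :
    Deduction {Formula.ex x α} (Formula.ex x α') := by
  have d2 : Deduction {α} (Formula.ex x α') :=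
    Deduction.existintro (Term.varterm x) x (FormulaSub.ident α' x) h
  have e := Deduction.existelim (NotFreeIn.ex_self x α')
    (by rintro γ ⟨rfl, hne⟩; exact absurd rfl hne)
    (Deduction.assume (Formula.ex x α)) d2
  exact Deduction.close (by intro γ hγ; simp at hγ ⊢; tauto) e

/-- Rename lemma for the universal quantifier. -/
lemma allRename {α β : Formula} {x y : FOVar} (hfree : NotFreeIn y α)
    (hsub : FormulaSub α x (Term.varterm y) β) :
    Deduction {Formula.all x α} (Formula.all y β) ∧
    Deduction {Formula.all y β} (Formula.all x α) := by
  by_cases hxy : x = y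
  · subst hxy
    have := formulaSub_self hsub rfl
    subst this
    exact ⟨Deduction.assume _, Deduction.assume _⟩
  · obtain ⟨hnf, hsub'⟩ := formulaSub_inv hsub rfl hxy hfree
    constructor
    · have d : Deduction {Formula.all x α} β :=
        Deduction.univelim (Term.varterm y) hsub (Deduction.assume _)
      refine Deduction.univintro y ?_ d
      rintro γ rfl
      exact NotFreeIn.all x hfree
    · have d : Deduction {Formula.all y β} α :=
        Deduction.univelim (Term.varterm x) hsub' (Deduction.assume _)
      refine Deduction.univintro x ?_ d
      rintro γ rfl
      exact NotFreeIn.all y hnf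

/-- Rename lemma for the existential quantifier. -/
lemma exRename {α β : Formula} {x y : FOVar} (hfree : NotFreeIn y α)
    (hsub : FormulaSub α x (Term.varterm y) β) :
    Deduction {Formula.ex x α} (Formula.ex y β) ∧
    Deduction {Formula.ex y β} (Formula.ex x α) := by
  by_cases hxy : x = y
  · subst hxy
    have := formulaSub_self hsub rfl
    subst this
    exact ⟨Deduction.assume _, Deduction.assume _⟩
  · obtain ⟨hnf, hsub'⟩ := formulaSub_inv hsub rfl hxy hfree
    constructor
    · have d2 : Deduction {α} (Formula.ex y β) :=
        Deduction.existintro (Term.varterm x) y hsub' (Deduction.assume α)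
      have e := Deduction.existelim (NotFreeIn.ex y hnf)
        (by rintro γ ⟨rfl, hne⟩; exact absurd rfl hne)
        (Deduction.assume (Formula.ex x α)) d2
      exact Deduction.close (by intro γ hγ; simp at hγ ⊢; tauto) e
    · have d2 : Deduction {β} (Formula.ex x α) :=
        Deduction.existintro (Term.varterm y) x hsub (Deduction.assume β)
      have e := Deduction.existelim (NotFreeIn.ex x hfree)
        (by rintro γ ⟨rfl, hne⟩; exact absurd rfl hne)
        (Deduction.assume (Formula.ex y β)) d2
      exact Deduction.close (by intro γ hγ; simp at hγ ⊢; tauto) e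

/-- Congruence for implication. -/
lemma impCong {α β α' β' : Formula} (da : Deduction {α'} α) (db : Deduction {β} β') :
    Deduction {Formula.imp α β} (Formula.imp α' β') := by
  have step1 : Deduction ({Formula.imp α β} ∪ {α'}) β :=
    Deduction.arrowelim (Deduction.assume (Formula.imp α β)) da
  have step2 := ded_cut step1 db
  have step3 := Deduction.arrowintro α' step2
  exact Deduction.close (by intro γ hγ; simp at hγ ⊢; tauto) step3

/-- Congruence for conjunction. -/
lemma andCong {α β α' β' : Formula} (da : Deduction {α} α') (db : Deduction {β} β') :
    Deduction {Formula.and α β} (Formula.and α' β') := by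
  have inner : Deduction ({α} ∪ {β}) (Formula.and α' β') := Deduction.conjintro da db
  have e := Deduction.conjelim (Deduction.assume (Formula.and α β)) inner
  exact Deduction.close (by intro γ hγ; simp at hγ ⊢; tauto) e

/-- Congruence for disjunction. -/
lemma orCong {α β α' β' : Formula} (da : Deduction {α} α') (db : Deduction {β} β') :
    Deduction {Formula.or α β} (Formula.or α' β') := by
  have e := Deduction.disjelim (Deduction.assume (Formula.or α β))
    (Deduction.disjintro1 β' da) (Deduction.disjintro2 α' db)
  exact Deduction.close (by intro γ hγ; simp at hγ ⊢; tauto) e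

/-- Equivalent formulas are interderivable from each other. -/
theorem equiv_ded {α α' : Formula} (h : FormulaEquiv α α') :
    Deduction {α} α' ∧ Deduction {α'} α := by
  induction h with
  | atom r ts => exact ⟨Deduction.assume _, Deduction.assume _⟩
  | imp _ _ ih1 ih2 => exact ⟨impCong ih1.2 ih2.1, impCong ih1.1 ih2.2⟩
  | and _ _ ih1 ih2 => exact ⟨andCong ih1.1 ih2.1, andCong ih1.2 ih2.2⟩
  | or _ _ ih1 ih2 => exact ⟨orCong ih1.1 ih2.1, orCong ih1.2 ih2.2⟩
  | all x _ ih => exact ⟨allCong ih.1, allCong ih.2⟩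
  | ex x _ ih => exact ⟨exCong ih.1, exCong ih.2⟩
  | all_rename hfree hsub _ ih =>
      have L := allRename hfree hsub
      exact ⟨ded_cut L.1 (allCong ih.1), ded_cut (allCong ih.2) L.2⟩
  | ex_rename hfree hsub _ ih =>
      have L := exRename hfree hsub
      exact ⟨ded_cut L.1 (exCong ih.1), ded_cut (exCong ih.2) L.2⟩
  | all_rename' _ hfree hsub ih =>
      have L := allRename hfree hsub
      exact ⟨ded_cut (allCong ih.1) L.1, ded_cut L.2 (allCong ih.2)⟩
  | ex_rename' _ hfree hsub ih =>
      have L := exRename hfree hsub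
      exact ⟨ded_cut (exCong ih.1) L.1, ded_cut L.2 (exCong ih.2)⟩

/-- The rename rule: equivalent formulas are equivalently derivable. -/
theorem rename_iff {Γ : Set Formula} {α α' : Formula} (h : FormulaEquiv α α') :
    Deduction Γ α ↔ Deduction Γ α' :=
  ⟨fun d => ded_cut d (equiv_ded h).1, fun d => ded_cut d (equiv_ded h).2⟩
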